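/- For all n ≥ 0 and r ≥ 1: x^n = ∑_{l=0}^{n} [ C(n,l) ∑_{m=0}^{min(r,l)} C(r,m)/(1-λ)^m · m! S(l,m) ] H_{n-l}^{(r)}(x|λ), where S(l,m) denotes the Stirling numbers of the second kind. -/

import Mathlib

open Finset PowerSeries

/-- `m! S(l,m) = ∑_{k₁+⋯+k_m = l, k_j ≥ 1} (l choose k₁,…,k_m)`, i.e. `m!` times the
Stirling number of the second kind. -/
def mFactStirling (l m : ℕ) : ℕ :=
  ∑ k ∈ (Finset.Nat.antidiagonalTuple m l).filter (fun k => ∀ j, 1 ≤ k j),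
    Nat.multinomial Finset.univ k

lemma mFactStirling_eq_zero {l m : ℕ} (h : l < m) : mFactStirling l m = 0 := by
  unfold mFactStirling
  rw [Finset.filter_eq_empty_iff.2, Finset.sum_empty]
  intro k hk
  rw [Finset.Nat.mem_antidiagonalTuple] at hk
  intro hall
  have : m ≤ l := by
    calc m = ∑ _j : Fin m, 1 := by simp
    _ ≤ ∑ j, k j := Finset.sum_le_sum fun j _ => hall j
    _ = l := hk
  omega

lemma coeff_exp_sub_one (k : ℕ) :
    PowerSeries.coeff k (PowerSeries.exp ℂ - 1) =
      if k = 0 then 0 else ((k.factorial : ℂ))⁻¹ := by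
  rw [map_sub, PowerSeries.coeff_exp, PowerSeries.coeff_one]
  rcases k with _ | k <;> simp

lemma coeff_exp_sub_one_pow (m l : ℕ) :
    PowerSeries.coeff l ((PowerSeries.exp ℂ - 1) ^ m) =
      (mFactStirling l m : ℂ) / (l.factorial : ℂ) := by
  have hprod : (PowerSeries.exp ℂ - 1) ^ m = ∏ _j : Fin m, (PowerSeries.exp ℂ - 1) := by
    simp [Finset.prod_const]
  rw [hprod, PowerSeries.coeff_prod]
  rw [← Finset.sum_filter_of_ne (p := fun d : Fin m →₀ ℕ => ∀ j, 1 ≤ d j)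
    (by
      intro d _ hne j
      by_contra hj
      push_neg at hj
      interval_cases h : d j
      · exact hne (Finset.prod_eq_zero (Finset.mem_univ j) (by rw [h, coeff_exp_sub_one]; simp)))]
  rw [mFactStirling, Nat.cast_sum, Finset.sum_div]
  refine Finset.sum_bij' (fun d _ => ⇑d) (fun k _ => Finsupp.equivFunOnFinite.symm k)
    ?_ ?_ ?_ ?_ ?_
  · intro d hd
    simp only [Finset.mem_filter, Finset.mem_finsuppAntidiag] at hd
    simp only [Finset.mem_filter, Finset.Nat.mem_antidiagonalTuple]
    exact ⟨hd.1.1, hd.2⟩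
  · intro k hk
    simp only [Finset.mem_filter, Finset.Nat.mem_antidiagonalTuple] at hk
    simp only [Finset.mem_filter, Finset.mem_finsuppAntidiag]
    refine ⟨⟨?_, Finset.subset_univ _⟩, fun j => by simpa using hk.2 j⟩
    simpa using hk.1
  · intro d _; exact Finsupp.equivFunOnFinite.symm_apply_apply d
  · intro k _; exact Finsupp.equivFunOnFinite.apply_symm_apply k
  · intro d hd
    simp only [Finset.mem_filter, Finset.mem_finsuppAntidiag] at hd
    have hsum : ∑ j, d j = l := hd.1.1
    have hfac : (∏ j, (d j).factorial) * Nat.multinomial Finset.univ ⇑d = l.factorial := by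
      have := Nat.multinomial_spec (Finset.univ : Finset (Fin m)) ⇑d
      rwa [hsum] at this
    have h1 : ∀ j : Fin m, PowerSeries.coeff (d j) (PowerSeries.exp ℂ - 1)
        = ((d j).factorial : ℂ)⁻¹ := by
      intro j
      rw [coeff_exp_sub_one, if_neg (by have := hd.2 j; omega)]
    rw [Finset.prod_congr rfl fun j _ => h1 j]
    rw [Finset.prod_inv_distrib]
    rw [eq_div_iff (by exact_mod_cast Nat.factorial_ne_zero l)]
    rw [inv_mul_eq_div, div_eq_iff (by
      exact Finset.prod_ne_zero_iff.2 fun j _ => by exact_mod_cast Nat.factorial_ne_zero (d j))]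
    rw [← Nat.cast_prod, ← Nat.cast_mul, mul_comm (Nat.multinomial _ _), hfac]

lemma coeff_shift_pow (lam : ℂ) (r l : ℕ) :
    PowerSeries.coeff l ((PowerSeries.exp ℂ - PowerSeries.C (R := ℂ) lam) ^ r) =
      ∑ m ∈ range (r + 1), (r.choose m : ℂ) * (1 - lam) ^ (r - m) *
        ((mFactStirling l m : ℂ) / (l.factorial : ℂ)) := by
  have hsplit : PowerSeries.exp ℂ - PowerSeries.C (R := ℂ) lam
      = (PowerSeries.exp ℂ - 1) + PowerSeries.C (R := ℂ) (1 - lam) := by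
    rw [map_sub, map_one]; ring
  rw [hsplit, add_pow, map_sum]
  refine Finset.sum_congr rfl fun m _ => ?_
  rw [← map_pow, ← Nat.cast_id (r.choose m), ← map_natCast (PowerSeries.C (R := ℂ)),
    PowerSeries.coeff_mul_C, PowerSeries.coeff_mul_C, coeff_exp_sub_one_pow]
  push_cast
  ring


/-- For `r ≥ 1`:
`xⁿ = ∑_{l=0}^{n} [C(n,l) ∑_{m=0}^{min(r,l)} C(r,m)/(1-λ)ᵐ · m!S(l,m)] H_{n-l}⁽ʳ⁾(x|λ)`. -/
theorem monomial_in_frobenius_euler (lam : ℂ) (hlam : lam ≠ 1)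
    (H : ℕ → ℕ → ℂ → ℂ)
    (hH : ∀ (r : ℕ) (x : ℂ),
      (PowerSeries.mk fun n => H r n x * ((n.factorial : ℂ))⁻¹) *
        (PowerSeries.exp ℂ - PowerSeries.C (R := ℂ) lam) ^ r =
      PowerSeries.C (R := ℂ) ((1 - lam) ^ r) *
        PowerSeries.mk fun n => x ^ n * ((n.factorial : ℂ))⁻¹)
    (n r : ℕ) (hr : 1 ≤ r) (x : ℂ) :
    x ^ n = ∑ l ∈ range (n + 1),
      ((n.choose l : ℂ) * ∑ m ∈ range (min r l + 1),
        (r.choose m : ℂ) / (1 - lam) ^ m * (mFactStirling l m : ℂ)) * H r (n - l) x := by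
  have hu : (1 : ℂ) - lam ≠ 0 := sub_ne_zero.2 (Ne.symm hlam)
  have hupow : ((1 : ℂ) - lam) ^ r ≠ 0 := pow_ne_zero _ hu
  have hnfac : ((n.factorial : ℂ)) ≠ 0 := by exact_mod_cast Nat.factorial_ne_zero n
  have key := congrArg (PowerSeries.coeff n) (hH r x)
  rw [PowerSeries.coeff_mul, PowerSeries.coeff_C_mul, PowerSeries.coeff_mk,
    Finset.Nat.sum_antidiagonal_eq_sum_range_succ_mk] at key
  have E : ∑ k ∈ range (n + 1), (H r k x * ((k.factorial : ℂ))⁻¹) *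
      (∑ m ∈ range (r + 1), (r.choose m : ℂ) * (1 - lam) ^ (r - m) *
        ((mFactStirling (n - k) m : ℂ) / (((n - k).factorial : ℂ)))) =
      (1 - lam) ^ r * (x ^ n * ((n.factorial : ℂ))⁻¹) := by
    rw [← key]
    refine Finset.sum_congr rfl fun k hk => ?_
    rw [PowerSeries.coeff_mk, coeff_shift_pow]
  have E2 : ∑ l ∈ range (n + 1), (H r (n - l) x * (((n - l).factorial : ℂ))⁻¹) *
      (∑ m ∈ range (r + 1), (r.choose m : ℂ) * (1 - lam) ^ (r - m) *
        ((mFactStirling l m : ℂ) / ((l.factorial : ℂ)))) =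
      (1 - lam) ^ r * (x ^ n * ((n.factorial : ℂ))⁻¹) := by
    rw [← E, ← Finset.sum_range_reflect]
    refine Finset.sum_congr rfl fun l hl => ?_
    rw [Finset.mem_range] at hl
    have h1 : n + 1 - 1 - l = n - l := by omega
    have h2 : n - (n - l) = l := by omega
    rw [h1, h2]
  have hterm : ∀ l ∈ range (n + 1),
      ((n.choose l : ℂ) * ∑ m ∈ range (min r l + 1),
        (r.choose m : ℂ) / (1 - lam) ^ m * (mFactStirling l m : ℂ)) * H r (n - l) x =
      ((n.factorial : ℂ) / (1 - lam) ^ r) *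
        ((H r (n - l) x * (((n - l).factorial : ℂ))⁻¹) *
          (∑ m ∈ range (r + 1), (r.choose m : ℂ) * (1 - lam) ^ (r - m) *
            ((mFactStirling l m : ℂ) / ((l.factorial : ℂ))))) := by
    intro l hl
    rw [Finset.mem_range] at hl
    have hln : l ≤ n := by omega
    have hext : ∑ m ∈ range (min r l + 1),
        (r.choose m : ℂ) / (1 - lam) ^ m * (mFactStirling l m : ℂ) =
        ∑ m ∈ range (r + 1),
        (r.choose m : ℂ) / (1 - lam) ^ m * (mFactStirling l m : ℂ) := by
      refine Finset.sum_subset (Finset.range_subset_range.2 (by omega)) ?_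
      intro m hm hnm
      rw [Finset.mem_range] at hm hnm
      have : l < m := by omega
      rw [mFactStirling_eq_zero this]
      simp
    rw [hext]
    rw [Finset.mul_sum, Finset.mul_sum, Finset.mul_sum, Finset.sum_mul]
    refine Finset.sum_congr rfl fun m hm => ?_
    rw [Finset.mem_range] at hm
    have hmr : m ≤ r := by omega
    have hsplit : ((1 : ℂ) - lam) ^ r = (1 - lam) ^ (r - m) * (1 - lam) ^ m := by
      rw [← pow_add]; congr 1; omega
    rw [Nat.cast_choose ℂ hln, hsplit]
    have hl1 : ((l.factorial : ℂ)) ≠ 0 := by exact_mod_cast Nat.factorial_ne_zero l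
    have hl2 : (((n - l).factorial : ℂ)) ≠ 0 := by exact_mod_cast Nat.factorial_ne_zero (n - l)
    field_simp
  rw [Finset.sum_congr rfl hterm, ← Finset.mul_sum, E2]
  field_simp
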